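/- Let X be a Hilbert space and M, N closed subspaces with a common complement in X. Then for each closed subspace M₁ of M with dim M₁ = ∞ and dim(M ⊖ M₁) = ∞, there exists a closed subspace N₁ of N with dim N₁ = ∞ and dim(N ⊖ N₁) = ∞ such that M₁ + N₁ is closed and M₁ ∩ N₁ = {0}. -/

import Mathlib

/-- If `g ∘ f = id` on a closed set `S`, then `f '' S` is closed. -/
private lemma closed_image_of_leftInv {X : Type*} [NormedAddCommGroup X]
    [InnerProductSpace ℝ X] (f g : X →L[ℝ] X) {S : Set X} (hS : IsClosed S)
    (hg : ∀ x ∈ S, g (f x) = x) : IsClosed (f '' S) := by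
  have heq : f '' S = (g ⁻¹' S) ∩ {y | f (g y) = y} := by
    ext y
    constructor
    · rintro ⟨x, hx, rfl⟩
      exact ⟨by simpa [Set.mem_preimage, hg x hx] using hx, by simp [hg x hx]⟩
    · rintro ⟨h1, h2⟩
      exact ⟨g y, h1, h2⟩
  rw [heq]
  exact (hS.preimage g.continuous).inter
    (isClosed_eq (f.continuous.comp g.continuous) continuous_id)

theorem stmt_13 {X : Type*} [NormedAddCommGroup X] [InnerProductSpace ℝ X] [CompleteSpace X]
    (M N : Submodule ℝ X) (hM : IsClosed (M : Set X)) (hN : IsClosed (N : Set X))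
    (h : ∃ K : Submodule ℝ X, IsClosed (K : Set X) ∧
        M ⊓ K = ⊥ ∧ M ⊔ K = ⊤ ∧ N ⊓ K = ⊥ ∧ N ⊔ K = ⊤)
    (M₁ : Submodule ℝ X) (hM₁ : IsClosed (M₁ : Set X)) (hM₁M : M₁ ≤ M)
    (hinf : ¬ FiniteDimensional ℝ M₁)
    (hcoinf : ¬ FiniteDimensional ℝ (M ⊓ M₁ᗮ : Submodule ℝ X)) :
    ∃ N₁ : Submodule ℝ X, IsClosed (N₁ : Set X) ∧ N₁ ≤ N ∧
      ¬ FiniteDimensional ℝ N₁ ∧ ¬ FiniteDimensional ℝ (N ⊓ N₁ᗮ : Submodule ℝ X) ∧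
      IsClosed ((M₁ ⊔ N₁ : Submodule ℝ X) : Set X) ∧ M₁ ⊓ N₁ = ⊥ := by
  obtain ⟨K, hK, hMK0, hMKt, hNK0, hNKt⟩ := h
  have cM : IsCompl M K := ⟨disjoint_iff.2 hMK0, codisjoint_iff.2 hMKt⟩
  have cN : IsCompl N K := ⟨disjoint_iff.2 hNK0, codisjoint_iff.2 hNKt⟩
  haveI : CompleteSpace M₁ := hM₁.completeSpace_coe
  -- Continuous projections onto N and M along K, as maps X → X.
  set P : X →L[ℝ] X := N.subtypeL ∘L N.linearProjOfClosedCompl K cN hN hK with hPdef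
  set Pm : X →L[ℝ] X := M.subtypeL ∘L M.linearProjOfClosedCompl K cM hM hK with hPmdef
  have hPmem : ∀ x : X, P x ∈ N := fun x => SetLike.coe_mem _
  have hPmmem : ∀ x : X, Pm x ∈ M := fun x => SetLike.coe_mem _
  have hPsub : ∀ x : X, x - P x ∈ K := by
    intro x
    have := Submodule.projection_add_projection_eq_self cN x
    have h2 : x - P x = (K.projectionOnto N cN.symm x : X) := by
      have hP : P x = (N.projectionOnto K cN x : X) := by
        rfl
      rw [hP, eq_comm, eq_sub_iff_add_eq, add_comm]
      exact this
    rw [h2]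
    exact SetLike.coe_mem _
  have hPmM : ∀ x ∈ M, Pm x = x := by
    intro x hx
    simp only [hPmdef, ContinuousLinearMap.comp_apply, Submodule.subtypeL_apply,
      Submodule.coe_continuous_linearProjOfClosedCompl']
    exact congrArg _ (Submodule.linearProjOfIsCompl_apply_left cM ⟨x, hx⟩)
  have hPmK : ∀ x ∈ K, Pm x = 0 := by
    intro x hx
    simp only [hPmdef, ContinuousLinearMap.comp_apply, Submodule.subtypeL_apply,
      Submodule.coe_continuous_linearProjOfClosedCompl']
    rw [Submodule.projectionOnto_apply_of_mem_right cM hx]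
    simp
  -- Key: Pm ∘ P = id on M
  have hPmP : ∀ x ∈ M, Pm (P x) = x := by
    intro x hx
    have : Pm (x - P x) = 0 := hPmK _ (hPsub x)
    have h2 : Pm x - Pm (P x) = 0 := by rw [← map_sub]; exact this
    have h3 : Pm x = x := hPmM x hx
    have := sub_eq_zero.1 h2
    rw [h3] at this
    exact this.symm
  -- injectivity of P on M
  have hPinj : ∀ x ∈ M, ∀ y ∈ M, P x = P y → x = y := by
    intro x hx y hy hxy
    rw [← hPmP x hx, ← hPmP y hy, hxy]
  -- orthogonal projection onto M₁, as map X → X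
  set Q : X →L[ℝ] X := M₁.subtypeL ∘L (M₁.orthogonalProjectionOnto : X →L[ℝ] M₁) with hQdef
  have hQmem : ∀ x : X, Q x ∈ M₁ := fun x => SetLike.coe_mem _
  have hQM₁ : ∀ x ∈ M₁, Q x = x := by
    intro x hx
    simp only [hQdef, ContinuousLinearMap.comp_apply, Submodule.subtypeL_apply]
    exact congrArg _ (Submodule.orthogonalProjectionOnto_mem_subspace_eq_self (⟨x, hx⟩ : M₁))
  have hQperp : ∀ x ∈ M₁ᗮ, Q x = 0 := by
    intro x hx
    simp only [hQdef, ContinuousLinearMap.comp_apply, Submodule.subtypeL_apply]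
    rw [Submodule.orthogonalProjectionOnto_apply_of_mem_orthogonal hx]
    simp
  have hQsub : ∀ x : X, x - Q x ∈ M₁ᗮ := fun x => M₁.sub_starProjection_mem_orthogonal x
  set M₂ : Submodule ℝ X := M ⊓ M₁ᗮ with hM₂def
  have hM₂closed : IsClosed (M₂ : Set X) := hM.inter M₁.isClosed_orthogonal
  set N₁ : Submodule ℝ X := M₂.map (P : X →ₗ[ℝ] X) with hN₁def
  have hN₁coe : (N₁ : Set X) = P '' (M₂ : Set X) := by
    simp [hN₁def, Submodule.map_coe]
  -- mem N₁ characterisation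
  have hN₁mem : ∀ y, y ∈ N₁ ↔ ∃ x ∈ M₂, P x = y := by
    intro y; simp [hN₁def, Submodule.mem_map]
  have hN₁closed : IsClosed (N₁ : Set X) := by
    rw [hN₁coe]
    exact closed_image_of_leftInv P Pm hM₂closed (fun x hx => hPmP x hx.1)
  have hN₁N : N₁ ≤ N := by
    intro y hy
    obtain ⟨x, _, rfl⟩ := (hN₁mem y).1 hy
    exact hPmem x
  haveI : CompleteSpace N₁ := hN₁closed.completeSpace_coe
  -- N₁ infinite dimensional
  have hN₁inf : ¬ FiniteDimensional ℝ N₁ := by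
    intro hfin
    apply hcoinf
    let φ : M₂ →ₗ[ℝ] N₁ :=
      (P : X →ₗ[ℝ] X).restrict (fun x hx => Submodule.mem_map_of_mem hx)
    have hφ : Function.Injective φ := by
      intro x y hxy
      have h0 : P (x : X) = P (y : X) := by
        have := Subtype.ext_iff.mp hxy
        simpa [φ, LinearMap.restrict_apply] using this
      exact Subtype.ext (hPinj x x.2.1 y y.2.1 h0)
    exact FiniteDimensional.of_injective φ hφ
  -- N ⊖ N₁ infinite dimensional
  have hcoN : ¬ FiniteDimensional ℝ (N ⊓ N₁ᗮ : Submodule ℝ X) := by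
    intro hfin
    apply hinf
    set R : X →L[ℝ] X :=
      P - (N₁.subtypeL ∘L (N₁.orthogonalProjectionOnto : X →L[ℝ] N₁)) ∘L P with hRdef
    have hRval : ∀ x : X, R x = P x - (N₁.orthogonalProjectionOnto (P x) : X) := by
      intro x; simp [hRdef]
    have hRmem : ∀ x : X, R x ∈ N ⊓ N₁ᗮ := by
      intro x
      rw [hRval]
      refine ⟨N.sub_mem (hPmem x) (hN₁N (SetLike.coe_mem _)), ?_⟩
      exact N₁.sub_starProjection_mem_orthogonal (P x)
    let ψ : M₁ →ₗ[ℝ] (N ⊓ N₁ᗮ : Submodule ℝ X) :=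
      (R : X →ₗ[ℝ] X).restrict (fun x _ => hRmem x)
    have hψ : Function.Injective ψ := by
      intro x y hxy
      have hval : R (x : X) = R (y : X) := by
        have := Subtype.ext_iff.mp hxy
        simpa [ψ, LinearMap.restrict_apply] using this
      -- show the underlying elements equal
      have key : ∀ z : X, z ∈ M₁ → R z = 0 → z = 0 := by
        intro z hz hRz
        have hPz : P z ∈ N₁ := by
          have h0 := hRval z
          rw [hRz, eq_comm, sub_eq_zero] at h0
          rw [h0]; exact SetLike.coe_mem _
        obtain ⟨w, hw, hwP⟩ := (hN₁mem (P z)).1 hPz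
        have hzw : z = w := (hPinj w hw.1 z (hM₁M hz) hwP).symm
        have hzperp : z ∈ M₁ᗮ := hzw ▸ hw.2
        have : z ∈ M₁ ⊓ M₁ᗮ := ⟨hz, hzperp⟩
        simpa using (Submodule.orthogonal_disjoint M₁).le_bot this
      have hsub : R ((x : X) - (y : X)) = 0 := by rw [map_sub, hval, sub_self]
      have : (x : X) - (y : X) = 0 := key _ (M₁.sub_mem x.2 y.2) hsub
      exact Subtype.ext (sub_eq_zero.1 this)
    exact FiniteDimensional.of_injective ψ hψ
  -- sum closed
  set S : X →L[ℝ] X := Q + P ∘L (ContinuousLinearMap.id ℝ X - Q) with hSdef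
  have hSval : ∀ x : X, S x = Q x + P (x - Q x) := by intro x; simp [hSdef]
  have hsupeq : ((M₁ ⊔ N₁ : Submodule ℝ X) : Set X) = S '' (M : Set X) := by
    ext y
    constructor
    · intro hy
      obtain ⟨a, ha, b, hb, rfl⟩ := Submodule.mem_sup.1 hy
      obtain ⟨w, hw, rfl⟩ := (hN₁mem b).1 hb
      refine ⟨a + w, M.add_mem (hM₁M ha) hw.1, ?_⟩
      have hQa : Q a = a := hQM₁ a ha
      have hQw : Q w = 0 := hQperp w hw.2
      rw [hSval]
      rw [map_add, hQa, hQw]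
      have h1 : a + w - (a + 0) = w := by abel
      rw [h1]
      abel
    · rintro ⟨x, hx, rfl⟩
      rw [hSval]
      refine Submodule.add_mem _ (Submodule.mem_sup_left (hQmem x)) (Submodule.mem_sup_right ?_)
      exact (hN₁mem _).2 ⟨x - Q x, ⟨M.sub_mem hx (hM₁M (hQmem x)), hQsub x⟩, rfl⟩
  have hsumclosed : IsClosed ((M₁ ⊔ N₁ : Submodule ℝ X) : Set X) := by
    rw [hsupeq]
    refine closed_image_of_leftInv S Pm hM ?_
    intro x hx
    rw [hSval, map_add, hPmM _ (hM₁M (hQmem x)),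
      hPmP _ (M.sub_mem hx (hM₁M (hQmem x)))]
    abel
  -- trivial intersection
  have hint : M₁ ⊓ N₁ = ⊥ := by
    rw [eq_bot_iff]
    rintro x ⟨hx1, hx2⟩
    obtain ⟨w, hw, hwP⟩ := (hN₁mem x).1 hx2
    have hxM : x ∈ M := hM₁M hx1
    have hxw : w = x := by rw [← hPmP w hw.1, hwP, hPmM x hxM]
    have hperp : x ∈ M₁ᗮ := hxw ▸ hw.2
    simpa using (Submodule.orthogonal_disjoint M₁).le_bot ⟨hx1, hperp⟩
  exact ⟨N₁, hN₁closed, hN₁N, hN₁inf, hcoN, hsumclosed, hint⟩
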